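/- If PG(n₁,q) contains a minimal blocking set of size k₁ and PG(n₂,q) contains a minimal blocking set of size k₂, then PG(n₁+n₂+1,q) contains a minimal blocking set of size k₁+k₂−1. -/

import Mathlib

open Module

/-- A set of points of PG(n,q) is a blocking set if it meets every hyperplane. -/
def IsBlockingSet (F : Type*) [Field F] (n : ℕ)
    (B : Set (Projectivization F (Fin (n + 1) → F))) : Prop :=
  ∀ W : Submodule F (Fin (n + 1) → F), finrank F W = n →
    ∃ x ∈ B, x.submodule ≤ W

/-- PG(n,q) contains a minimal blocking set of size k. -/
def HasMinimalBlockingSet (F : Type*) [Field F] (n k : ℕ) : Prop :=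
  ∃ B : Set (Projectivization F (Fin (n + 1) → F)),
    B.Finite ∧ B.ncard = k ∧ IsBlockingSet F n B ∧
    ∀ B' ⊂ B, ¬ IsBlockingSet F n B'

namespace BlockAux

open Projectivization Submodule

variable {F : Type*} [Field F] {V W : Type*} [AddCommGroup V] [Module F V]
  [AddCommGroup W] [Module F W]

/-- Generalized blocking set. -/
def GB (F : Type*) [Field F] (V : Type*) [AddCommGroup V] [Module F V]
    (B : Set (Projectivization F V)) : Prop :=
  ∀ S : Submodule F V, finrank F S + 1 = finrank F V → ∃ x ∈ B, x.submodule ≤ S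

/-- Generalized "has a minimal blocking set of size k". -/
def GHM (F : Type*) [Field F] (V : Type*) [AddCommGroup V] [Module F V] (k : ℕ) : Prop :=
  ∃ B : Set (Projectivization F V), B.Finite ∧ B.ncard = k ∧ GB F V B ∧
    ∀ B' ⊂ B, ¬ GB F V B'

lemma submodule_map (f : V →ₗ[F] W) (hf : Function.Injective f) (x : Projectivization F V) :
    (Projectivization.map f hf x).submodule = x.submodule.map f := by
  conv_lhs => rw [← x.mk_rep]
  rw [Projectivization.map_mk, Projectivization.submodule_mk, Projectivization.submodule_eq,
    Submodule.map_span, Set.image_singleton]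

lemma le_iff_rep_mem {x : Projectivization F V} {S : Submodule F V} :
    x.submodule ≤ S ↔ x.rep ∈ S := by
  rw [Projectivization.submodule_eq, Submodule.span_singleton_le_iff_mem]

lemma exists_hyperplane [FiniteDimensional F V] (h : 0 < finrank F V) :
    ∃ S : Submodule F V, finrank F S + 1 = finrank F V := by
  have : Nontrivial V := Module.nontrivial_of_finrank_pos h
  obtain ⟨v, hv⟩ := exists_ne (0 : V)
  have hd := (Module.forall_dual_apply_eq_zero_iff F v).not.2 hv
  push_neg at hd
  obtain ⟨φ, hφ⟩ := hd
  refine ⟨LinearMap.ker φ, ?_⟩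
  have hsurj : Function.Surjective φ := fun c =>
    ⟨(c / φ v) • v, by rw [map_smul, smul_eq_mul, div_mul_cancel₀ _ hφ]⟩
  have h1 := LinearMap.finrank_range_add_finrank_ker φ
  rw [LinearMap.range_eq_top.2 hsurj, finrank_top, Module.finrank_self] at h1
  omega

lemma exists_not_mem_of_hyp [FiniteDimensional F V] {T : Submodule F V}
    (h : finrank F T + 1 = finrank F V) : ∃ u, u ∉ T := by
  have hT : T ≠ ⊤ := by
    intro hT
    rw [hT, finrank_top] at h
    omega
  by_contra hu
  push_neg at hu
  exact hT (Submodule.eq_top_iff'.2 hu)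

lemma trace_rank {U : Type*} [AddCommGroup U] [Module F U] [FiniteDimensional F U]
    [FiniteDimensional F V] {S : Submodule F U} (hS : finrank F S + 1 = finrank F U)
    (f : V →ₗ[F] U) :
    S.comap f = ⊤ ∨ finrank F (S.comap f) + 1 = finrank F V := by
  by_cases h : S.comap f = ⊤
  · exact Or.inl h
  right
  have h1 : finrank F (S.comap f) < finrank F V := Submodule.finrank_lt h
  have h2 : S.comap f = LinearMap.ker (S.mkQ.comp f) := by
    ext x
    simp [Submodule.Quotient.mk_eq_zero]
  have h3 := LinearMap.finrank_range_add_finrank_ker (S.mkQ.comp f)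
  rw [← h2] at h3
  have h4 : finrank F (LinearMap.range (S.mkQ.comp f)) ≤ finrank F (U ⧸ S) :=
    (LinearMap.range (S.mkQ.comp f)).finrank_le
  have h5 := Submodule.finrank_quotient_add_finrank S
  omega

lemma hyper_prod [FiniteDimensional F V] [FiniteDimensional F W]
    {T₁ : Submodule F V} {T₂ : Submodule F W} {u₁ : V} {u₂ : W}
    (hT₁ : finrank F T₁ + 1 = finrank F V) (hT₂ : finrank F T₂ + 1 = finrank F W)
    (hu₁ : u₁ ∉ T₁) (hu₂ : u₂ ∉ T₂) :
    ∃ S : Submodule F (V × W), finrank F S + 1 = finrank F (V × W) ∧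
      (∀ a ∈ T₁, ∀ b ∈ T₂, (a, b) ∈ S) ∧
      (∀ a b, (a, b) ∈ S → (a ∈ T₁ ↔ b ∈ T₂)) := by
  have hu₁0 : u₁ ≠ 0 := fun h => hu₁ (h ▸ T₁.zero_mem)
  have hu0 : (u₁, u₂) ≠ (0 : V × W) := fun h => hu₁0 (congrArg Prod.fst h)
  refine ⟨(T₁.prod T₂) ⊔ (F ∙ (u₁, u₂)), ?_, ?_, ?_⟩
  · -- finrank computation
    have hinf : (T₁.prod T₂) ⊓ (F ∙ (u₁, u₂)) = ⊥ := by
      rw [eq_bot_iff]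
      intro z hz
      rw [Submodule.mem_inf] at hz
      obtain ⟨hz1, hz2⟩ := hz
      rw [Submodule.mem_span_singleton] at hz2
      obtain ⟨t, rfl⟩ := hz2
      rcases eq_or_ne t 0 with rfl | ht
      · simp
      · exfalso
        have : (u₁, u₂) ∈ T₁.prod T₂ := by
          have := (T₁.prod T₂).smul_mem t⁻¹ hz1
          rwa [inv_smul_smul₀ ht] at this
        exact hu₁ this.1
    have h1 := Submodule.finrank_sup_add_finrank_inf_eq (T₁.prod T₂) (F ∙ (u₁, u₂))
    have hspan : finrank F (F ∙ (u₁, u₂)) = 1 := finrank_span_singleton hu0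
    have hinf2 : (T₁.map (LinearMap.inl F V W)) ⊓ (T₂.map (LinearMap.inr F V W)) = ⊥ := by
      rw [eq_bot_iff]
      intro z hz
      rw [Submodule.mem_inf] at hz
      obtain ⟨hz1, hz2⟩ := hz
      obtain ⟨a, ha, rfl⟩ := hz1
      obtain ⟨b, hb, hab⟩ := hz2
      simp only [LinearMap.inl_apply, LinearMap.inr_apply, Prod.mk.injEq] at hab
      have : a = 0 := by rw [← hab.1]
      simp [this]
    have h2 := Submodule.finrank_sup_add_finrank_inf_eq (T₁.map (LinearMap.inl F V W))
      (T₂.map (LinearMap.inr F V W))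
    rw [hinf2] at h2
    have hm1 : finrank F (T₁.map (LinearMap.inl F V W)) = finrank F T₁ :=
      (Submodule.equivMapOfInjective _ LinearMap.inl_injective T₁).finrank_eq.symm
    have hm2 : finrank F (T₂.map (LinearMap.inr F V W)) = finrank F T₂ :=
      (Submodule.equivMapOfInjective _ LinearMap.inr_injective T₂).finrank_eq.symm
    have hpr : finrank F (T₁.prod T₂) = finrank F T₁ + finrank F T₂ := by
      rw [finrank_bot, hm1, hm2, ← LinearMap.prod_eq_sup_map] at h2
      omega
    rw [hinf, finrank_bot, hspan, hpr] at h1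
    rw [Module.finrank_prod]
    omega
  · intro a ha b hb
    exact Submodule.mem_sup_left (Submodule.mem_prod.2 ⟨ha, hb⟩ : (a, b) ∈ T₁.prod T₂)
  · intro a b hab
    rw [Submodule.mem_sup] at hab
    obtain ⟨x, hx, y, hy, hxy⟩ := hab
    rw [Submodule.mem_span_singleton] at hy
    obtain ⟨t, rfl⟩ := hy
    have hab1 : a = x.1 + t • u₁ := by simpa using (congrArg Prod.fst hxy).symm
    have hab2 : b = x.2 + t • u₂ := by simpa using (congrArg Prod.snd hxy).symm
    rcases eq_or_ne t 0 with rfl | ht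
    · simp only [zero_smul, add_zero] at hab1 hab2
      subst hab1; subst hab2
      exact iff_of_true hx.1 hx.2
    · refine iff_of_false ?_ ?_
      · intro haT
        have h1 : t • u₁ ∈ T₁ := by
          have : a - x.1 ∈ T₁ := T₁.sub_mem haT hx.1
          rwa [hab1, add_sub_cancel_left] at this
        have := T₁.smul_mem t⁻¹ h1
        rw [inv_smul_smul₀ ht] at this
        exact hu₁ this
      · intro hbT
        have h1 : t • u₂ ∈ T₂ := by
          have : b - x.2 ∈ T₂ := T₂.sub_mem hbT hx.2
          rwa [hab2, add_sub_cancel_left] at this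
        have := T₂.smul_mem t⁻¹ h1
        rw [inv_smul_smul₀ ht] at this
        exact hu₂ this

lemma gb_image_iff (e : V ≃ₗ[F] W) (B : Set (Projectivization F V)) :
    GB F W (Projectivization.map (e : V →ₗ[F] W) e.injective '' B) ↔ GB F V B := by
  constructor
  · intro h S hS
    have h2 : finrank F (S.map (e : V →ₗ[F] W)) + 1 = finrank F W := by
      rw [LinearEquiv.finrank_map_eq, ← e.finrank_eq]; exact hS
    obtain ⟨y, ⟨x, hxB, rfl⟩, hy⟩ := h (S.map (e : V →ₗ[F] W)) h2
    refine ⟨x, hxB, ?_⟩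
    rw [submodule_map] at hy
    exact (Submodule.map_le_map_iff_of_injective e.injective _ _).1 hy
  · intro h S hS
    have h2 : finrank F (S.comap (e : V →ₗ[F] W)) + 1 = finrank F V := by
      rw [Submodule.comap_equiv_eq_map_symm, LinearEquiv.finrank_map_eq, e.finrank_eq]
      exact hS
    obtain ⟨x, hxB, hx⟩ := h _ h2
    refine ⟨_, Set.mem_image_of_mem _ hxB, ?_⟩
    rw [submodule_map]
    exact Submodule.map_le_iff_le_comap.2 hx

lemma ghm_congr (e : V ≃ₗ[F] W) {k : ℕ} (h : GHM F V k) : GHM F W k := by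
  obtain ⟨B, hf, hc, hb, hm⟩ := h
  have hj : Function.Injective (Projectivization.map (e : V →ₗ[F] W) e.injective) :=
    Projectivization.map_injective _ _
  set j := Projectivization.map (e : V →ₗ[F] W) e.injective with hjdef
  refine ⟨j '' B, hf.image _, by rw [Set.ncard_image_of_injective _ hj, hc],
    (gb_image_iff e B).2 hb, ?_⟩
  intro B' hB'
  have hsub : j ⁻¹' B' ⊆ B := by
    intro x hx
    obtain ⟨x', hx', hxx⟩ := hB'.subset hx
    exact (hj hxx) ▸ hx'
  have himg : j '' (j ⁻¹' B') = B' :=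
    Set.image_preimage_eq_of_subset (hB'.subset.trans (Set.image_subset_range _ _))
  have hss : j ⁻¹' B' ⊂ B := by
    refine ⟨hsub, fun hBsub => ?_⟩
    obtain ⟨y, hyB, hyB'⟩ := Set.exists_of_ssubset hB'
    obtain ⟨x, hxB, rfl⟩ := hyB
    exact hyB' (hBsub hxB)
  intro hGB
  exact hm _ hss ((gb_image_iff e _).1 (by rwa [himg]))

lemma exists_tight {B : Set (Projectivization F V)} (hB : GB F V B)
    (hmin : ∀ B' ⊂ B, ¬ GB F V B') {b : Projectivization F V} (hb : b ∈ B) :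
    ∃ T : Submodule F V, finrank F T + 1 = finrank F V ∧ b.submodule ≤ T ∧
      ∀ a ∈ B, a.submodule ≤ T → a = b := by
  have h1 : ¬ GB F V (B \ {b}) := hmin _ (Set.sdiff_singleton_ssubset.2 hb)
  rw [GB] at h1
  push_neg at h1
  obtain ⟨T, hT, hT2⟩ := h1
  obtain ⟨y, hyB, hyT⟩ := hB T hT
  have hu : ∀ a ∈ B, a.submodule ≤ T → a = b := by
    intro a haB haT
    by_contra hne
    exact hT2 a ⟨haB, hne⟩ haT
  exact ⟨T, hT, hu y hyB hyT ▸ hyT, hu⟩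

lemma hmbs_iff (F : Type*) [Field F] (n k : ℕ) :
    HasMinimalBlockingSet F n k ↔ GHM F (Fin (n + 1) → F) k := by
  have hfr : finrank F (Fin (n + 1) → F) = n + 1 := Module.finrank_fin_fun F
  have hiff : ∀ B, IsBlockingSet F n B ↔ GB F (Fin (n + 1) → F) B := by
    intro B
    constructor <;> intro h S hS <;> exact h S (by omega)
  unfold HasMinimalBlockingSet GHM
  refine exists_congr fun B => ?_
  simp only [hiff]

lemma ghm_prod [FiniteDimensional F V] [FiniteDimensional F W]
    (h0V : 0 < finrank F V) (h0W : 0 < finrank F W)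
    {k₁ k₂ : ℕ} (h₁ : GHM F V k₁) (h₂ : GHM F W k₂) :
    GHM F (V × W) (k₁ + k₂ - 1) := by
  classical
  obtain ⟨B₁, hB₁f, hB₁c, hB₁b, hB₁m⟩ := h₁
  obtain ⟨B₂, hB₂f, hB₂c, hB₂b, hB₂m⟩ := h₂
  obtain ⟨W₀, hW₀⟩ := exists_hyperplane (F := F) (V := V) h0V
  obtain ⟨b₁, hb₁, -⟩ := hB₁b W₀ hW₀
  obtain ⟨W₀', hW₀'⟩ := exists_hyperplane (F := F) (V := W) h0W
  obtain ⟨b₂, hb₂, -⟩ := hB₂b W₀' hW₀'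
  have hv₁ : b₁.rep ≠ 0 := Projectivization.rep_nonzero b₁
  have hv₂ : b₂.rep ≠ 0 := Projectivization.rep_nonzero b₂
  have hp0 : (b₁.rep, b₂.rep) ≠ (0 : V × W) := fun h => hv₁ (congrArg Prod.fst h)
  set j₁ : Projectivization F V → Projectivization F (V × W) :=
    Projectivization.map (LinearMap.inl F V W) LinearMap.inl_injective with hj₁def
  set j₂ : Projectivization F W → Projectivization F (V × W) :=
    Projectivization.map (LinearMap.inr F V W) LinearMap.inr_injective with hj₂def
  have hj₁inj : Function.Injective j₁ := Projectivization.map_injective _ _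
  have hj₂inj : Function.Injective j₂ := Projectivization.map_injective _ _
  set p : Projectivization F (V × W) := Projectivization.mk F (b₁.rep, b₂.rep) hp0 with hpdef
  -- submodule descriptions
  have hj₁sub : ∀ x : Projectivization F V,
      (j₁ x).submodule = Submodule.span F {(x.rep, (0 : W))} := by
    intro x
    rw [hj₁def, submodule_map, Projectivization.submodule_eq, Submodule.map_span,
      Set.image_singleton, LinearMap.inl_apply]
  have hj₂sub : ∀ x : Projectivization F W,
      (j₂ x).submodule = Submodule.span F {((0 : V), x.rep)} := by
    intro x
    rw [hj₂def, submodule_map, Projectivization.submodule_eq, Submodule.map_span,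
      Set.image_singleton, LinearMap.inr_apply]
  have hpsub : p.submodule = Submodule.span F {(b₁.rep, b₂.rep)} := by
    rw [hpdef, Projectivization.submodule_mk]
  have hj₁le : ∀ (x : Projectivization F V) (S : Submodule F (V × W)),
      (j₁ x).submodule ≤ S ↔ (x.rep, (0 : W)) ∈ S := by
    intro x S
    rw [hj₁sub, Submodule.span_singleton_le_iff_mem]
  have hj₂le : ∀ (x : Projectivization F W) (S : Submodule F (V × W)),
      (j₂ x).submodule ≤ S ↔ ((0 : V), x.rep) ∈ S := by
    intro x S
    rw [hj₂sub, Submodule.span_singleton_le_iff_mem]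
  have hple : ∀ S : Submodule F (V × W), p.submodule ≤ S ↔ (b₁.rep, b₂.rep) ∈ S := by
    intro S
    rw [hpsub, Submodule.span_singleton_le_iff_mem]
  -- distinctness
  have hj₁j₂ : ∀ x y, j₁ x ≠ j₂ y := by
    intro x y h
    have h1 : (x.rep, (0 : W)) ∈ (j₁ x).submodule := by
      rw [hj₁sub]; exact Submodule.mem_span_singleton_self _
    rw [h, hj₂sub, Submodule.mem_span_singleton] at h1
    obtain ⟨t, ht⟩ := h1
    have : t • (0 : V) = x.rep := congrArg Prod.fst ht
    rw [smul_zero] at this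
    exact Projectivization.rep_nonzero x this.symm
  have hpj₁ : ∀ x, p ≠ j₁ x := by
    intro x h
    have h1 : (b₁.rep, b₂.rep) ∈ p.submodule := by
      rw [hpsub]; exact Submodule.mem_span_singleton_self _
    rw [h, hj₁sub, Submodule.mem_span_singleton] at h1
    obtain ⟨t, ht⟩ := h1
    have : t • (0 : W) = b₂.rep := congrArg Prod.snd ht
    rw [smul_zero] at this
    exact hv₂ this.symm
  have hpj₂ : ∀ x, p ≠ j₂ x := by
    intro x h
    have h1 : (b₁.rep, b₂.rep) ∈ p.submodule := by
      rw [hpsub]; exact Submodule.mem_span_singleton_self _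
    rw [h, hj₂sub, Submodule.mem_span_singleton] at h1
    obtain ⟨t, ht⟩ := h1
    have : t • (0 : V) = b₁.rep := congrArg Prod.fst ht
    rw [smul_zero] at this
    exact hv₁ this.symm
  set B : Set (Projectivization F (V × W)) :=
    (j₁ '' (B₁ \ {b₁})) ∪ (j₂ '' (B₂ \ {b₂})) ∪ {p} with hBdef
  have hBf : B.Finite :=
    (((hB₁f.subset Set.diff_subset).image _).union
      ((hB₂f.subset Set.diff_subset).image _)).union (Set.finite_singleton p)
  -- cardinality
  have hd12 : Disjoint (j₁ '' (B₁ \ {b₁})) (j₂ '' (B₂ \ {b₂})) := by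
    rw [Set.disjoint_left]
    rintro z ⟨x, -, rfl⟩ ⟨y, -, hy⟩
    exact hj₁j₂ x y hy.symm
  have hdp : Disjoint ((j₁ '' (B₁ \ {b₁})) ∪ (j₂ '' (B₂ \ {b₂}))) {p} := by
    rw [Set.disjoint_singleton_right]
    rintro (⟨x, -, hx⟩ | ⟨y, -, hy⟩)
    · exact hpj₁ x hx.symm
    · exact hpj₂ y hy.symm
  have hk₁ : 1 ≤ k₁ := by
    rw [← hB₁c]
    exact (Set.ncard_pos hB₁f).2 ⟨b₁, hb₁⟩
  have hk₂ : 1 ≤ k₂ := by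
    rw [← hB₂c]
    exact (Set.ncard_pos hB₂f).2 ⟨b₂, hb₂⟩
  have hcard : B.ncard = k₁ + k₂ - 1 := by
    rw [hBdef, Set.ncard_union_eq hdp
        (((hB₁f.subset Set.diff_subset).image _).union ((hB₂f.subset Set.diff_subset).image _))
        (Set.finite_singleton p),
      Set.ncard_union_eq hd12 ((hB₁f.subset Set.diff_subset).image _)
        ((hB₂f.subset Set.diff_subset).image _),
      Set.ncard_image_of_injective _ hj₁inj, Set.ncard_image_of_injective _ hj₂inj,
      Set.ncard_diff_singleton_of_mem hb₁, Set.ncard_diff_singleton_of_mem hb₂,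
      hB₁c, hB₂c, Set.ncard_singleton]
    omega
  -- blocking
  have hblock : GB F (V × W) B := by
    intro S hS
    have c₁ : ∃ b ∈ B₁, b.submodule ≤ S.comap (LinearMap.inl F V W) := by
      rcases trace_rank hS (LinearMap.inl F V W) with h | h
      · exact ⟨b₁, hb₁, h ▸ le_top⟩
      · exact hB₁b _ h
    have c₂ : ∃ c ∈ B₂, c.submodule ≤ S.comap (LinearMap.inr F V W) := by
      rcases trace_rank hS (LinearMap.inr F V W) with h | h
      · exact ⟨b₂, hb₂, h ▸ le_top⟩
      · exact hB₂b _ h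
    obtain ⟨b, hbB, hbS⟩ := c₁
    obtain ⟨c, hcB, hcS⟩ := c₂
    have hbmem : (b.rep, (0 : W)) ∈ S := le_iff_rep_mem.1 hbS
    have hcmem : ((0 : V), c.rep) ∈ S := le_iff_rep_mem.1 hcS
    by_cases hbb : b = b₁
    · by_cases hcc : c = b₂
      · refine ⟨p, Or.inr rfl, (hple S).2 ?_⟩
        have hsum := S.add_mem (hbb ▸ hbmem) (hcc ▸ hcmem)
        simpa using hsum
      · exact ⟨j₂ c, Or.inl (Or.inr ⟨c, ⟨hcB, hcc⟩, rfl⟩), (hj₂le c S).2 hcmem⟩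
    · exact ⟨j₁ b, Or.inl (Or.inl ⟨b, ⟨hbB, hbb⟩, rfl⟩), (hj₁le b S).2 hbmem⟩
  -- minimality: a tight hyperplane through each point
  have hmin : ∀ x ∈ B, ∃ S : Submodule F (V × W), finrank F S + 1 = finrank F (V × W) ∧
      ∀ y ∈ B, y.submodule ≤ S → y = x := by
    rintro x ((⟨a, ⟨haB, hab⟩, rfl⟩ | ⟨a, ⟨haB, hab⟩, rfl⟩) | hxp)
    · -- x = j₁ a with a ∈ B₁, a ≠ b₁
      obtain ⟨T₁, hT₁r, hT₁a, hT₁u⟩ := exists_tight hB₁b hB₁m haB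
      obtain ⟨T₂, hT₂r, hT₂b, hT₂u⟩ := exists_tight hB₂b hB₂m hb₂
      have hb₁T : b₁.rep ∉ T₁ := by
        intro h
        exact hab (hT₁u b₁ hb₁ (le_iff_rep_mem.2 h)).symm
      obtain ⟨u₂, hu₂⟩ := exists_not_mem_of_hyp hT₂r
      obtain ⟨S, hSr, hSmem, hSiff⟩ := hyper_prod hT₁r hT₂r hb₁T hu₂
      refine ⟨S, hSr, ?_⟩
      rintro y ((⟨c, ⟨hcB, hcb⟩, rfl⟩ | ⟨c, ⟨hcB, hcb⟩, rfl⟩) | hyp) hyS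
      · -- y = j₁ c
        have h1 : (c.rep, (0 : W)) ∈ S := (hj₁le c S).1 hyS
        have hc : c.rep ∈ T₁ := (hSiff _ _ h1).2 T₂.zero_mem
        exact congrArg j₁ (hT₁u c hcB (le_iff_rep_mem.2 hc))
      · -- y = j₂ c with c ≠ b₂ : impossible
        exfalso
        have h1 : ((0 : V), c.rep) ∈ S := (hj₂le c S).1 hyS
        have hc : c.rep ∈ T₂ := (hSiff _ _ h1).1 T₁.zero_mem
        exact hcb (hT₂u c hcB (le_iff_rep_mem.2 hc))
      · -- y = p : impossible
        exfalso
        rw [Set.mem_singleton_iff] at hyp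
        subst hyp
        have h1 : (b₁.rep, b₂.rep) ∈ S := (hple S).1 hyS
        have hb2T : b₂.rep ∈ T₂ := le_iff_rep_mem.1 hT₂b
        exact hb₁T ((hSiff _ _ h1).2 hb2T)
    · -- x = j₂ a with a ∈ B₂, a ≠ b₂
      obtain ⟨T₁, hT₁r, hT₁b, hT₁u⟩ := exists_tight hB₁b hB₁m hb₁
      obtain ⟨T₂, hT₂r, hT₂a, hT₂u⟩ := exists_tight hB₂b hB₂m haB
      have hb₂T : b₂.rep ∉ T₂ := by
        intro h
        exact hab (hT₂u b₂ hb₂ (le_iff_rep_mem.2 h)).symm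
      obtain ⟨u₁, hu₁⟩ := exists_not_mem_of_hyp hT₁r
      obtain ⟨S, hSr, hSmem, hSiff⟩ := hyper_prod hT₁r hT₂r hu₁ hb₂T
      refine ⟨S, hSr, ?_⟩
      rintro y ((⟨c, ⟨hcB, hcb⟩, rfl⟩ | ⟨c, ⟨hcB, hcb⟩, rfl⟩) | hyp) hyS
      · exfalso
        have h1 : (c.rep, (0 : W)) ∈ S := (hj₁le c S).1 hyS
        have hc : c.rep ∈ T₁ := (hSiff _ _ h1).2 T₂.zero_mem
        exact hcb (hT₁u c hcB (le_iff_rep_mem.2 hc))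
      · have h1 : ((0 : V), c.rep) ∈ S := (hj₂le c S).1 hyS
        have hc : c.rep ∈ T₂ := (hSiff _ _ h1).1 T₁.zero_mem
        exact congrArg j₂ (hT₂u c hcB (le_iff_rep_mem.2 hc))
      · exfalso
        rw [Set.mem_singleton_iff] at hyp
        subst hyp
        have h1 : (b₁.rep, b₂.rep) ∈ S := (hple S).1 hyS
        have hb1T : b₁.rep ∈ T₁ := le_iff_rep_mem.1 hT₁b
        exact hb₂T ((hSiff _ _ h1).1 hb1T)
    · -- x = p
      rw [Set.mem_singleton_iff] at hxp
      subst hxp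
      obtain ⟨T₁, hT₁r, hT₁b, hT₁u⟩ := exists_tight hB₁b hB₁m hb₁
      obtain ⟨T₂, hT₂r, hT₂b, hT₂u⟩ := exists_tight hB₂b hB₂m hb₂
      obtain ⟨u₁, hu₁⟩ := exists_not_mem_of_hyp hT₁r
      obtain ⟨u₂, hu₂⟩ := exists_not_mem_of_hyp hT₂r
      obtain ⟨S, hSr, hSmem, hSiff⟩ := hyper_prod hT₁r hT₂r hu₁ hu₂
      refine ⟨S, hSr, ?_⟩
      rintro y ((⟨c, ⟨hcB, hcb⟩, rfl⟩ | ⟨c, ⟨hcB, hcb⟩, rfl⟩) | hyp) hyS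
      · exfalso
        have h1 : (c.rep, (0 : W)) ∈ S := (hj₁le c S).1 hyS
        have hc : c.rep ∈ T₁ := (hSiff _ _ h1).2 T₂.zero_mem
        exact hcb (hT₁u c hcB (le_iff_rep_mem.2 hc))
      · exfalso
        have h1 : ((0 : V), c.rep) ∈ S := (hj₂le c S).1 hyS
        have hc : c.rep ∈ T₂ := (hSiff _ _ h1).1 T₁.zero_mem
        exact hcb (hT₂u c hcB (le_iff_rep_mem.2 hc))
      · rw [Set.mem_singleton_iff] at hyp
        exact hyp
  refine ⟨B, hBf, hcard, hblock, ?_⟩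
  intro B' hB' hGB
  obtain ⟨x, hxB, hxB'⟩ := Set.exists_of_ssubset hB'
  obtain ⟨S, hSr, hSu⟩ := hmin x hxB
  obtain ⟨y, hyB', hyS⟩ := hGB S hSr
  exact hxB' (hSu y (hB'.subset hyB') hyS ▸ hyB')

end BlockAux

/-- If PG(n₁,q) and PG(n₂,q) contain minimal blocking sets of sizes k₁ and k₂, then
PG(n₁+n₂+1,q) contains a minimal blocking set of size k₁+k₂−1. -/
theorem stmt14 (F : Type*) [Field F] [Fintype F] (n₁ n₂ k₁ k₂ : ℕ)
    (h₁ : HasMinimalBlockingSet F n₁ k₁) (h₂ : HasMinimalBlockingSet F n₂ k₂) :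
    HasMinimalBlockingSet F (n₁ + n₂ + 1) (k₁ + k₂ - 1) := by
  rw [BlockAux.hmbs_iff] at h₁ h₂ ⊢
  have hfr : finrank F ((Fin (n₁ + 1) → F) × (Fin (n₂ + 1) → F)) =
      finrank F (Fin (n₁ + n₂ + 1 + 1) → F) := by
    rw [Module.finrank_prod, Module.finrank_fin_fun, Module.finrank_fin_fun,
      Module.finrank_fin_fun]
    omega
  have e : ((Fin (n₁ + 1) → F) × (Fin (n₂ + 1) → F)) ≃ₗ[F] (Fin (n₁ + n₂ + 1 + 1) → F) :=
    LinearEquiv.ofFinrankEq _ _ hfr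
  exact BlockAux.ghm_congr e (BlockAux.ghm_prod
    (by rw [Module.finrank_fin_fun]; omega) (by rw [Module.finrank_fin_fun]; omega) h₁ h₂)
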